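/- The identity I(X^n → Y^n) = Σ_{i=1}^n I(X_i; Y_i^n | X^{i-1}, Y^{i-1}) holds, where Y_i^n = (Y_i, Y_{i+1}, …, Y_n); that is, the two expansions of directed information agree. -/
import Mathlib


open scoped Classical
open Real

noncomputable section

variable {α β : Type} [Fintype α] [DecidableEq α] [Fintype β] [DecidableEq β]

/-- Probability of the event `E` under the joint pmf `p` of `(X^n, Y^n)`. -/
def pr {n : ℕ} (p : (Fin n → α) → (Fin n → β) → ℝ)
    (E : (Fin n → α) → (Fin n → β) → Prop) : ℝ :=
  ∑ x, ∑ y, if E x y then p x y else 0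

/-- `p` is a probability mass function on pairs of sequences. -/
def IsPmf {n : ℕ} (p : (Fin n → α) → (Fin n → β) → ℝ) : Prop :=
  (∀ x y, 0 ≤ p x y) ∧ ∑ x, ∑ y, p x y = 1

/-- The conditional pmf `p(x_i | x^{i-1}, y^{i-d})` evaluated along `(x, y)`. -/
def condX {n : ℕ} (p : (Fin n → α) → (Fin n → β) → ℝ) (d : ℕ) (i : Fin n)
    (x : Fin n → α) (y : Fin n → β) : ℝ :=
  pr p (fun x' y' => (∀ j, j < i → x' j = x j) ∧ x' i = x i ∧
      ∀ j : Fin n, (j : ℕ) + d ≤ (i : ℕ) → y' j = y j) /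
  pr p (fun x' y' => (∀ j, j < i → x' j = x j) ∧
      ∀ j : Fin n, (j : ℕ) + d ≤ (i : ℕ) → y' j = y j)

/-- The conditional pmf `p(y_i | y^{i-1}, x^{i-d})` evaluated along `(x, y)`. -/
def condY {n : ℕ} (p : (Fin n → α) → (Fin n → β) → ℝ) (d : ℕ) (i : Fin n)
    (x : Fin n → α) (y : Fin n → β) : ℝ :=
  pr p (fun x' y' => (∀ j, j < i → y' j = y j) ∧ y' i = y i ∧
      ∀ j : Fin n, (j : ℕ) + d ≤ (i : ℕ) → x' j = x j) /
  pr p (fun x' y' => (∀ j, j < i → y' j = y j) ∧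
      ∀ j : Fin n, (j : ℕ) + d ≤ (i : ℕ) → x' j = x j)

/-- Causally conditioned pmf `p(x^n || y^{n-d}) = ∏ᵢ p(xᵢ | x^{i-1}, y^{i-d})`. -/
def ccX {n : ℕ} (p : (Fin n → α) → (Fin n → β) → ℝ) (d : ℕ)
    (x : Fin n → α) (y : Fin n → β) : ℝ :=
  ∏ i, condX p d i x y

/-- Causally conditioned pmf `p(y^n || x^{n-d}) = ∏ᵢ p(yᵢ | y^{i-1}, x^{i-d})`. -/
def ccY {n : ℕ} (p : (Fin n → α) → (Fin n → β) → ℝ) (d : ℕ)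
    (x : Fin n → α) (y : Fin n → β) : ℝ :=
  ∏ i, condY p d i x y

/-- Marginal pmf of `X^n`. -/
def pX {n : ℕ} (p : (Fin n → α) → (Fin n → β) → ℝ) (x : Fin n → α) : ℝ := ∑ y, p x y

/-- Marginal pmf of `Y^n`. -/
def pY {n : ℕ} (p : (Fin n → α) → (Fin n → β) → ℝ) (y : Fin n → β) : ℝ := ∑ x, p x y

/-- `H(X^n)` in bits. -/
def HX {n : ℕ} (p : (Fin n → α) → (Fin n → β) → ℝ) : ℝ :=
  -(∑ x, ∑ y, p x y * Real.logb 2 (pX p x))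

/-- `H(Y^n)` in bits. -/
def HY {n : ℕ} (p : (Fin n → α) → (Fin n → β) → ℝ) : ℝ :=
  -(∑ x, ∑ y, p x y * Real.logb 2 (pY p y))

/-- Joint entropy `H(X^n, Y^n)` in bits. -/
def Hjoint {n : ℕ} (p : (Fin n → α) → (Fin n → β) → ℝ) : ℝ :=
  -(∑ x, ∑ y, p x y * Real.logb 2 (p x y))

/-- Conditional entropy `H(X_i | X^{i-1}, Y^{i-d})` in bits. -/
def HcondX {n : ℕ} (p : (Fin n → α) → (Fin n → β) → ℝ) (d : ℕ) (i : Fin n) : ℝ :=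
  -(∑ x, ∑ y, p x y * Real.logb 2 (condX p d i x y))

/-- Conditional entropy `H(Y_i | Y^{i-1}, X^{i-d})` in bits. -/
def HcondY {n : ℕ} (p : (Fin n → α) → (Fin n → β) → ℝ) (d : ℕ) (i : Fin n) : ℝ :=
  -(∑ x, ∑ y, p x y * Real.logb 2 (condY p d i x y))

/-- Causally conditional entropy `H(X^n || Y^{n-d}) = Σᵢ H(Xᵢ | X^{i-1}, Y^{i-d})`. -/
def HccX {n : ℕ} (p : (Fin n → α) → (Fin n → β) → ℝ) (d : ℕ) : ℝ := ∑ i, HcondX p d i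

/-- Causally conditional entropy `H(Y^n || X^{n-d})`. -/
def HccY {n : ℕ} (p : (Fin n → α) → (Fin n → β) → ℝ) (d : ℕ) : ℝ := ∑ i, HcondY p d i

/-- Conditional mutual information `I(Y^i; X_i | X^{i-1})`
(as the expectation of `log (p(xᵢ|x^{i-1},y^i) / p(xᵢ|x^{i-1}))`;
note `condX p n` is `p(xᵢ|x^{i-1})`, conditioning on no `y`'s at all). -/
def cmiYX {n : ℕ} (p : (Fin n → α) → (Fin n → β) → ℝ) (i : Fin n) : ℝ :=
  ∑ x, ∑ y, p x y * Real.logb 2 (condX p 0 i x y / condX p n i x y)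

/-- Conditional mutual information `I(X^i; Y_i | Y^{i-1})`. -/
def cmiXY {n : ℕ} (p : (Fin n → α) → (Fin n → β) → ℝ) (i : Fin n) : ℝ :=
  ∑ x, ∑ y, p x y * Real.logb 2 (condY p 0 i x y / condY p n i x y)

/-- Directed information `I(Y^n → X^n) = Σᵢ I(Y^i; X_i | X^{i-1})`. -/
def dirYX {n : ℕ} (p : (Fin n → α) → (Fin n → β) → ℝ) : ℝ := ∑ i, cmiYX p i

/-- Directed information `I(X^n → Y^n) = Σᵢ I(X^i; Y_i | Y^{i-1})`. -/
def dirXY {n : ℕ} (p : (Fin n → α) → (Fin n → β) → ℝ) : ℝ := ∑ i, cmiXY p i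

/-- Directed information `I(Y^{n-1} → X^n) = Σᵢ I(Y^{i-1}; X_i | X^{i-1})`
(the term for `i = 1` vanishes, so we may sum over all `i`). -/
def dirY1X {n : ℕ} (p : (Fin n → α) → (Fin n → β) → ℝ) : ℝ :=
  ∑ i, ∑ x, ∑ y, p x y * Real.logb 2 (condX p 1 i x y / condX p n i x y)

/-- Mutual information `I(X^n; Y^n)` in bits. -/
def miXY {n : ℕ} (p : (Fin n → α) → (Fin n → β) → ℝ) : ℝ :=
  ∑ x, ∑ y, p x y * Real.logb 2 (p x y / (pX p x * pY p y))

/-- The conditional pmf `p(x_i | x^{i-1}, y^n)` evaluated along `(x, y)`. -/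
def condXfull {n : ℕ} (p : (Fin n → α) → (Fin n → β) → ℝ) (i : Fin n)
    (x : Fin n → α) (y : Fin n → β) : ℝ :=
  pr p (fun x' y' => (∀ j, j < i → x' j = x j) ∧ x' i = x i ∧ ∀ j, y' j = y j) /
  pr p (fun x' y' => (∀ j, j < i → x' j = x j) ∧ ∀ j, y' j = y j)

/- ===== auxiliary lemmas ===== -/

lemma pr_congr {n : ℕ} (p : (Fin n → α) → (Fin n → β) → ℝ)
    {E E' : (Fin n → α) → (Fin n → β) → Prop} (h : ∀ x y, E x y ↔ E' x y) :
    pr p E = pr p E' := by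
  unfold pr
  refine Finset.sum_congr rfl fun x _ => Finset.sum_congr rfl fun y _ => ?_
  simp only [h x y]

/-- Joint prefix probability `P(x'_{<a} = x, y'_{<b} = y)`. -/
def SS {n : ℕ} (p : (Fin n → α) → (Fin n → β) → ℝ) (x : Fin n → α) (y : Fin n → β)
    (a b : ℕ) : ℝ :=
  pr p (fun x' y' => (∀ j : Fin n, (j : ℕ) < a → x' j = x j) ∧
      (∀ j : Fin n, (j : ℕ) < b → y' j = y j))

lemma SS_zero_zero {n : ℕ} (p : (Fin n → α) → (Fin n → β) → ℝ) (hp : IsPmf p)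
    (x : Fin n → α) (y : Fin n → β) : SS p x y 0 0 = 1 := by
  unfold SS pr
  simp only [Nat.not_lt_zero, false_implies, implies_true, and_self, if_true]
  exact hp.2

lemma SS_n_n {n : ℕ} (p : (Fin n → α) → (Fin n → β) → ℝ)
    (x : Fin n → α) (y : Fin n → β) : SS p x y n n = p x y := by
  unfold SS pr
  have hiff : ∀ (x' : Fin n → α) (y' : Fin n → β),
      ((∀ j : Fin n, (j : ℕ) < n → x' j = x j) ∧ (∀ j : Fin n, (j : ℕ) < n → y' j = y j))
        ↔ (x' = x ∧ y' = y) := by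
    intro x' y'
    constructor
    · rintro ⟨h1, h2⟩
      exact ⟨funext fun j => h1 j j.isLt, funext fun j => h2 j j.isLt⟩
    · rintro ⟨rfl, rfl⟩; exact ⟨fun _ _ => rfl, fun _ _ => rfl⟩
  simp only [hiff]
  rw [Finset.sum_eq_single x (fun b _ hb => Finset.sum_eq_zero fun y' _ => by simp [hb])
      (fun h => absurd (Finset.mem_univ x) h),
    Finset.sum_eq_single y (fun b _ hb => by simp [hb]) (fun h => absurd (Finset.mem_univ y) h)]
  simp

lemma le_pr {n : ℕ} (p : (Fin n → α) → (Fin n → β) → ℝ) (hp : ∀ x y, 0 ≤ p x y)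
    {E : (Fin n → α) → (Fin n → β) → Prop} {x : Fin n → α} {y : Fin n → β} (hE : E x y) :
    p x y ≤ pr p E := by
  unfold pr
  have hnn : ∀ (x' : Fin n → α) (y' : Fin n → β), 0 ≤ if E x' y' then p x' y' else 0 := by
    intro x' y'; by_cases h : E x' y' <;> simp [h, hp]
  calc p x y = (if E x y then p x y else 0) := by simp [hE]
    _ ≤ ∑ y', if E x y' then p x y' else 0 :=
        Finset.single_le_sum (fun y' _ => hnn x y') (Finset.mem_univ y)
    _ ≤ ∑ x', ∑ y', if E x' y' then p x' y' else 0 :=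
        Finset.single_le_sum
          (fun x' _ => Finset.sum_nonneg fun y' _ => hnn x' y') (Finset.mem_univ x)

lemma SS_pos {n : ℕ} (p : (Fin n → α) → (Fin n → β) → ℝ) (hp : IsPmf p)
    {x : Fin n → α} {y : Fin n → β} (hxy : 0 < p x y) (a b : ℕ) : 0 < SS p x y a b :=
  lt_of_lt_of_le hxy (le_pr p hp.1 ⟨fun _ _ => rfl, fun _ _ => rfl⟩)

lemma condY0_eq {n : ℕ} (p : (Fin n → α) → (Fin n → β) → ℝ)
    (x : Fin n → α) (y : Fin n → β) (i : Fin n) :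
    condY p 0 i x y = SS p x y ((i : ℕ) + 1) ((i : ℕ) + 1) / SS p x y ((i : ℕ) + 1) (i : ℕ) := by
  unfold condY SS
  congr 1
  · apply pr_congr; intro x' y'
    constructor
    · rintro ⟨h1, h2, h3⟩
      refine ⟨fun j hj => h3 j (by omega), fun j hj => ?_⟩
      rcases Nat.lt_succ_iff_lt_or_eq.mp hj with h | h
      · exact h1 j (Fin.lt_def.mpr h)
      · rw [Fin.ext h]; exact h2
    · rintro ⟨hx, hy⟩
      exact ⟨fun j hj => hy j (Nat.lt_succ_of_lt (Fin.lt_def.mp hj)),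
        hy i (Nat.lt_succ_self _), fun j hj => hx j (by omega)⟩
  · apply pr_congr; intro x' y'
    constructor
    · rintro ⟨h1, h2⟩
      exact ⟨fun j hj => h2 j (by omega), fun j hj => h1 j (Fin.lt_def.mpr hj)⟩
    · rintro ⟨hx, hy⟩
      exact ⟨fun j hj => hy j (Fin.lt_def.mp hj), fun j hj => hx j (by omega)⟩

lemma condYn_eq {n : ℕ} (p : (Fin n → α) → (Fin n → β) → ℝ)
    (x : Fin n → α) (y : Fin n → β) (i : Fin n) :
    condY p n i x y = SS p x y 0 ((i : ℕ) + 1) / SS p x y 0 (i : ℕ) := by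
  unfold condY SS
  congr 1
  · apply pr_congr; intro x' y'
    constructor
    · rintro ⟨h1, h2, _⟩
      refine ⟨fun j hj => absurd hj (by omega), fun j hj => ?_⟩
      rcases Nat.lt_succ_iff_lt_or_eq.mp hj with h | h
      · exact h1 j (Fin.lt_def.mpr h)
      · rw [Fin.ext h]; exact h2
    · rintro ⟨_, hy⟩
      refine ⟨fun j hj => hy j (Nat.lt_succ_of_lt (Fin.lt_def.mp hj)),
        hy i (Nat.lt_succ_self _), fun j hj => absurd hj (by have := j.isLt; have := i.isLt; omega)⟩
  · apply pr_congr; intro x' y'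
    constructor
    · rintro ⟨h1, _⟩
      exact ⟨fun j hj => absurd hj (by omega), fun j hj => h1 j (Fin.lt_def.mpr hj)⟩
    · rintro ⟨_, hy⟩
      exact ⟨fun j hj => hy j (Fin.lt_def.mp hj),
        fun j hj => absurd hj (by have := j.isLt; have := i.isLt; omega)⟩

lemma condX1_eq {n : ℕ} (p : (Fin n → α) → (Fin n → β) → ℝ)
    (x : Fin n → α) (y : Fin n → β) (i : Fin n) :
    condX p 1 i x y = SS p x y ((i : ℕ) + 1) (i : ℕ) / SS p x y (i : ℕ) (i : ℕ) := by
  unfold condX SS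
  congr 1
  · apply pr_congr; intro x' y'
    constructor
    · rintro ⟨h1, h2, h3⟩
      refine ⟨fun j hj => ?_, fun j hj => h3 j (by omega)⟩
      rcases Nat.lt_succ_iff_lt_or_eq.mp hj with h | h
      · exact h1 j (Fin.lt_def.mpr h)
      · rw [Fin.ext h]; exact h2
    · rintro ⟨hx, hy⟩
      exact ⟨fun j hj => hx j (Nat.lt_succ_of_lt (Fin.lt_def.mp hj)),
        hx i (Nat.lt_succ_self _), fun j hj => hy j (by omega)⟩

lemma condXfull_eq {n : ℕ} (p : (Fin n → α) → (Fin n → β) → ℝ)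
    (x : Fin n → α) (y : Fin n → β) (i : Fin n) :
    condXfull p i x y = SS p x y ((i : ℕ) + 1) n / SS p x y (i : ℕ) n := by
  unfold condXfull SS
  congr 1
  · apply pr_congr; intro x' y'
    constructor
    · rintro ⟨h1, h2, h3⟩
      refine ⟨fun j hj => ?_, fun j _ => h3 j⟩
      rcases Nat.lt_succ_iff_lt_or_eq.mp hj with h | h
      · exact h1 j (Fin.lt_def.mpr h)
      · rw [Fin.ext h]; exact h2
    · rintro ⟨hx, hy⟩
      exact ⟨fun j hj => hx j (Nat.lt_succ_of_lt (Fin.lt_def.mp hj)),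
        hx i (Nat.lt_succ_self _), fun j => hy j j.isLt⟩
  · apply pr_congr; intro x' y'
    constructor
    · rintro ⟨h1, h2⟩
      exact ⟨fun j hj => h1 j (Fin.lt_def.mpr hj), fun j _ => h2 j⟩
    · rintro ⟨hx, hy⟩
      exact ⟨fun j hj => hx j (Fin.lt_def.mp hj), fun j => hy j j.isLt⟩

/-- the identity
`I(X^n → Y^n) = Σᵢ I(X_i; Y_i^n | X^{i-1}, Y^{i-1})`, where the `i`-th term on the
right is the conditional mutual information
`E[log (p(x_i | x^{i-1}, y^n) / p(x_i | x^{i-1}, y^{i-1}))]`. -/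
theorem dirInfo_alternative_expansion {n : ℕ}
    (p : (Fin n → α) → (Fin n → β) → ℝ) (hp : IsPmf p) :
    dirXY p =
      ∑ i, ∑ x, ∑ y,
        p x y * Real.logb 2 (condXfull p i x y / condX p 1 i x y) := by
  have swap : ∀ g : Fin n → (Fin n → α) → (Fin n → β) → ℝ,
      (∑ i, ∑ x, ∑ y, g i x y) = ∑ x, ∑ y, ∑ i, g i x y := by
    intro g
    rw [Finset.sum_comm]
    exact Finset.sum_congr rfl fun x _ => Finset.sum_comm
  unfold dirXY cmiXY
  rw [swap, swap]
  refine Finset.sum_congr rfl fun x _ => Finset.sum_congr rfl fun y _ => ?_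
  by_cases hxy : p x y = 0
  · simp [hxy]
  · have hpos : 0 < p x y := lt_of_le_of_ne (hp.1 x y) (Ne.symm hxy)
    have hS : ∀ a b, 0 < SS p x y a b := fun a b => SS_pos p hp hpos a b
    set L : ℕ → ℕ → ℝ := fun a b => Real.logb 2 (SS p x y a b) with hLdef
    rw [← Finset.mul_sum, ← Finset.mul_sum]
    congr 1
    have e1 : (∑ i : Fin n, Real.logb 2 (condY p 0 i x y / condY p n i x y))
        = ∑ k ∈ Finset.range n,
            ((L (k+1) (k+1) - L (k+1) k) - (L 0 (k+1) - L 0 k)) := by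
      rw [← Fin.sum_univ_eq_sum_range
        (fun k => (L (k+1) (k+1) - L (k+1) k) - (L 0 (k+1) - L 0 k)) n]
      refine Finset.sum_congr rfl fun i _ => ?_
      rw [condY0_eq, condYn_eq,
        Real.logb_div (div_pos (hS _ _) (hS _ _)).ne' (div_pos (hS _ _) (hS _ _)).ne',
        Real.logb_div (hS _ _).ne' (hS _ _).ne', Real.logb_div (hS _ _).ne' (hS _ _).ne']
    have e2 : (∑ i : Fin n, Real.logb 2 (condXfull p i x y / condX p 1 i x y))
        = ∑ k ∈ Finset.range n,
            ((L (k+1) n - L k n) - (L (k+1) k - L k k)) := by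
      rw [← Fin.sum_univ_eq_sum_range
        (fun k => (L (k+1) n - L k n) - (L (k+1) k - L k k)) n]
      refine Finset.sum_congr rfl fun i _ => ?_
      rw [condXfull_eq, condX1_eq,
        Real.logb_div (div_pos (hS _ _) (hS _ _)).ne' (div_pos (hS _ _) (hS _ _)).ne',
        Real.logb_div (hS _ _).ne' (hS _ _).ne', Real.logb_div (hS _ _).ne' (hS _ _).ne']
    rw [e1, e2]
    have t1 := Finset.sum_range_sub (fun k => L k k) n
    have t2 := Finset.sum_range_sub (fun k => L 0 k) n
    have t3 := Finset.sum_range_sub (fun k => L k n) n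
    have key : ∀ k ∈ Finset.range n,
        ((L (k+1) (k+1) - L (k+1) k) - (L 0 (k+1) - L 0 k))
          = ((L (k+1) n - L k n) - (L (k+1) k - L k k))
            + (((L (k+1) (k+1) - L k k) - (L 0 (k+1) - L 0 k)) - (L (k+1) n - L k n)) :=
      fun k _ => by ring
    rw [Finset.sum_congr rfl key, Finset.sum_add_distrib]
    have hz : (∑ k ∈ Finset.range n,
        (((L (k+1) (k+1) - L k k) - (L 0 (k+1) - L 0 k)) - (L (k+1) n - L k n))) = 0 := by
      rw [Finset.sum_sub_distrib, Finset.sum_sub_distrib, t1, t2, t3]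
      ring
    rw [hz, add_zero]
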